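/- Let R = k[a1, a2] be a polynomial ring over a field, p ≥ 2, x1 = a1^p, x2 = a2^p, y = a1*a2^(p-1), I = (x1, x2, y). Then for every n ≥ 1, (x1) ∩ I^n = x1 * I^(n-1) (where I^0 = R). -/

import Mathlib

open MvPolynomial Pointwise

namespace Stmt2Aux

variable {k : Type*} [Field k]

noncomputable def f (k : Type*) [Field k] : (Fin 2 →₀ ℕ) → MvPolynomial (Fin 2) k :=
  fun s => monomial s (1 : k)

lemma span_image_mul (A B : Set (Fin 2 →₀ ℕ)) :
    Ideal.span (f k '' A) * Ideal.span (f k '' B) = Ideal.span (f k '' (A + B)) := by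
  rw [Ideal.span_mul_span']
  congr 1
  ext x
  constructor
  · rintro ⟨_, ⟨a, ha, rfl⟩, _, ⟨b, hb, rfl⟩, rfl⟩
    exact ⟨a + b, Set.mem_add.2 ⟨a, ha, b, hb, rfl⟩, by simp [f, monomial_mul]⟩
  · rintro ⟨_, ⟨a, ha, b, hb, rfl⟩, rfl⟩
    exact ⟨f k a, ⟨a, ha, rfl⟩, f k b, ⟨b, hb, rfl⟩, by simp [f, monomial_mul]⟩

noncomputable def e1 (p : ℕ) : Fin 2 →₀ ℕ := Finsupp.single 0 p
noncomputable def e2 (p : ℕ) : Fin 2 →₀ ℕ := Finsupp.single 1 p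
noncomputable def e3 (p : ℕ) : Fin 2 →₀ ℕ := Finsupp.single 0 1 + Finsupp.single 1 (p - 1)

def T (p : ℕ) : ℕ → Set (Fin 2 →₀ ℕ)
  | 0 => {0}
  | n + 1 => ({e1 p, e2 p, e3 p} : Set (Fin 2 →₀ ℕ)) + T p n

lemma mem_T (p n : ℕ) (v : Fin 2 →₀ ℕ) :
    v ∈ T p n ↔ ∃ i j l : ℕ, i + j + l = n ∧ v = i • e1 p + j • e2 p + l • e3 p := by
  induction n generalizing v with
  | zero =>
    simp only [T, Set.mem_singleton_iff]
    constructor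
    · rintro rfl; exact ⟨0, 0, 0, rfl, by simp⟩
    · rintro ⟨i, j, l, hsum, rfl⟩
      obtain ⟨rfl, rfl, rfl⟩ : i = 0 ∧ j = 0 ∧ l = 0 := by omega
      simp
  | succ n ih =>
    constructor
    · rintro h
      obtain ⟨a, ha, b, hb, rfl⟩ := Set.mem_add.1 h
      obtain ⟨i, j, l, hsum, rfl⟩ := (ih b).1 hb
      rcases ha with rfl | rfl | rfl
      · exact ⟨i + 1, j, l, by omega, by rw [add_smul, one_smul]; abel⟩
      · exact ⟨i, j + 1, l, by omega, by rw [add_smul, one_smul]; abel⟩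
      · exact ⟨i, j, l + 1, by omega, by rw [add_smul, one_smul]; abel⟩
    · rintro ⟨i, j, l, hsum, rfl⟩
      apply Set.mem_add.2
      rcases i with _ | i
      · rcases j with _ | j
        · rcases l with _ | l
          · omega
          · exact ⟨e3 p, by simp, 0 • e1 p + 0 • e2 p + l • e3 p,
              (ih _).2 ⟨0, 0, l, by omega, rfl⟩, by rw [add_smul, one_smul]; abel⟩
        · exact ⟨e2 p, by simp, 0 • e1 p + j • e2 p + l • e3 p,
            (ih _).2 ⟨0, j, l, by omega, rfl⟩, by rw [add_smul, one_smul]; abel⟩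
      · exact ⟨e1 p, by simp, i • e1 p + j • e2 p + l • e3 p,
          (ih _).2 ⟨i, j, l, by omega, rfl⟩, by rw [add_smul, one_smul]; abel⟩

lemma apply0 (p i j l : ℕ) : (i • e1 p + j • e2 p + l • e3 p) 0 = i * p + l := by
  simp [e1, e2, e3, Finsupp.single_apply, mul_add]

lemma apply1 (p i j l : ℕ) : (i • e1 p + j • e2 p + l • e3 p) 1 = j * p + l * (p - 1) := by
  simp [e1, e2, e3, Finsupp.single_apply, mul_add]

/-- The key combinatorial lemma on exponents. -/
lemma key_arith (p : ℕ) (hp : 2 ≤ p) (n i j l A B : ℕ) (hsum : i + j + l = n + 1)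
    (h0 : i * p + l ≤ A) (h1 : j * p + l * (p - 1) ≤ B) (hA : p ≤ A) :
    ∃ i' j' l' : ℕ, i' + j' + l' = n ∧ p + (i' * p + l') ≤ A ∧
      j' * p + l' * (p - 1) ≤ B := by
  obtain ⟨q, rfl⟩ : ∃ q, p = q + 2 := ⟨p - 2, by omega⟩
  have hq : (q + 2) - 1 = q + 1 := rfl
  rw [hq] at h1 ⊢
  rcases i with _ | i
  · -- i = 0, so j + l = n + 1
    by_cases hl : l ≤ q + 1
    · -- l < p : take (0, n, 0)
      refine ⟨0, n, 0, by omega, by omega, ?_⟩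
      have : n * (q + 2) ≤ j * (q + 2) + l * (q + 1) := by nlinarith
      omega
    · -- l ≥ p : take (0, j + q + 1, l - (q+2))
      refine ⟨0, j + q + 1, l - (q + 2), by omega, by omega, ?_⟩
      have hl' : q + 2 ≤ l := by omega
      have : (j + q + 1) * (q + 2) + (l - (q + 2)) * (q + 1)
          = j * (q + 2) + l * (q + 1) := by
        obtain ⟨r, rfl⟩ : ∃ r, l = r + (q + 2) := ⟨l - (q + 2), by omega⟩
        simp only [Nat.add_sub_cancel]
        ring
      omega
  · -- i ≥ 1 : take (i, j, l)
    refine ⟨i, j, l, by omega, ?_, h1⟩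
    have : (i + 1) * (q + 2) = (q + 2) + i * (q + 2) := by ring
    omega

end Stmt2Aux

open Stmt2Aux

/-- In `R = k[a1,a2]`, with `x1 = a1^p`, `x2 = a2^p`, `y = a1*a2^(p-1)`,
`I = (x1,x2,y)`, for every `n ≥ 1` one has `(x1) ∩ I^n = x1*I^(n-1)`. -/
theorem stmt_2 {k : Type*} [Field k] (p : ℕ) (hp : 2 ≤ p)
    (a1 a2 : MvPolynomial (Fin 2) k) (ha1 : a1 = X 0) (ha2 : a2 = X 1)
    (I : Ideal (MvPolynomial (Fin 2) k))
    (hI : I = Ideal.span {a1 ^ p, a2 ^ p, a1 * a2 ^ (p - 1)}) :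
    ∀ n : ℕ, 1 ≤ n →
      Ideal.span {a1 ^ p} ⊓ I ^ n = Ideal.span {a1 ^ p} * I ^ (n - 1) := by
  subst ha1 ha2
  have hmon1 : (X 0 : MvPolynomial (Fin 2) k) ^ p = f k (e1 p) := by
    simp [f, e1, X_pow_eq_monomial]
  have hmon2 : (X 1 : MvPolynomial (Fin 2) k) ^ p = f k (e2 p) := by
    simp [f, e2, X_pow_eq_monomial]
  have hmon3 : (X 0 : MvPolynomial (Fin 2) k) * X 1 ^ (p - 1) = f k (e3 p) := by
    rw [f, e3, X_pow_eq_monomial, X, monomial_mul, one_mul]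
  have hgen : ({X 0 ^ p, X 1 ^ p, X 0 * X 1 ^ (p - 1)} : Set (MvPolynomial (Fin 2) k))
      = f k '' {e1 p, e2 p, e3 p} := by
    rw [hmon1, hmon2, hmon3]
    simp [Set.image_insert_eq]
  have hI' : I = Ideal.span (f k '' ({e1 p, e2 p, e3 p} : Set (Fin 2 →₀ ℕ))) := by
    rw [hI, hgen]
  have hx1 : Ideal.span ({X 0 ^ p} : Set (MvPolynomial (Fin 2) k))
      = Ideal.span (f k '' {e1 p}) := by rw [hmon1, Set.image_singleton]
  have hpow : ∀ N : ℕ, I ^ N = Ideal.span (f k '' T p N) := by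
    intro N
    induction N with
    | zero =>
      simp only [pow_zero, T, Set.image_singleton]
      rw [Ideal.one_eq_top, f]
      simp [Ideal.span_singleton_one]
    | succ N ih =>
      rw [pow_succ, mul_comm, ih, hI', span_image_mul]
      rfl
  intro n hn
  obtain ⟨m, rfl⟩ : ∃ m, n = m + 1 := ⟨n - 1, by omega⟩
  simp only [Nat.add_sub_cancel]
  apply le_antisymm
  · -- hard direction
    rw [hx1, hpow (m + 1), hpow m, span_image_mul]
    intro x hx
    obtain ⟨h1, h2⟩ := Submodule.mem_inf.1 hx
    unfold f at h1 h2 ⊢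
    rw [mem_ideal_span_monomial_image] at h1 h2 ⊢
    intro xi hxi
    obtain ⟨s1, hs1, hle1⟩ := h1 xi hxi
    obtain ⟨s2, hs2, hle2⟩ := h2 xi hxi
    rw [Set.mem_singleton_iff] at hs1
    subst hs1
    obtain ⟨i, j, l, hsum, rfl⟩ := (mem_T p (m + 1) s2).1 hs2
    have hA : p ≤ xi 0 := by
      have := Finsupp.le_def.1 hle1 0
      simpa [e1, Finsupp.single_apply] using this
    have h0 : i * p + l ≤ xi 0 := by
      have := Finsupp.le_def.1 hle2 0
      rwa [apply0] at this
    have h1' : j * p + l * (p - 1) ≤ xi 1 := by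
      have := Finsupp.le_def.1 hle2 1
      rwa [apply1] at this
    obtain ⟨i', j', l', hsum', hA', hB'⟩ :=
      key_arith p hp m i j l (xi 0) (xi 1) hsum h0 h1' hA
    refine ⟨e1 p + (i' • e1 p + j' • e2 p + l' • e3 p),
      Set.mem_add.2 ⟨e1 p, rfl, _, (mem_T p m _).2 ⟨i', j', l', hsum', rfl⟩, rfl⟩, ?_⟩
    rw [Finsupp.le_def]
    intro a
    have ha0 : (e1 p) (0 : Fin 2) = p := by simp [e1]
    have ha1 : (e1 p) (1 : Fin 2) = 0 := by simp [e1, Finsupp.single_apply]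
    fin_cases a
    · show (e1 p + (i' • e1 p + j' • e2 p + l' • e3 p)) 0 ≤ xi 0
      rw [Finsupp.add_apply, apply0, ha0]
      exact hA'
    · show (e1 p + (i' • e1 p + j' • e2 p + l' • e3 p)) 1 ≤ xi 1
      rw [Finsupp.add_apply, apply1, ha1]
      simpa using hB'
  · -- easy direction
    refine le_inf Ideal.mul_le_left ?_
    rw [pow_succ, mul_comm (I ^ m) I]
    refine Ideal.mul_mono ?_ le_rfl
    rw [Ideal.span_singleton_le_iff_mem, hI]
    exact Ideal.subset_span (by simp)
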